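/- The generating function identity Σ_{n≥0} p(n) x^n = ( Σ_{k∈ℤ} (-1)^k x^{k(3k−1)/2} )^{-1} holds as formal power series, i.e. ( Σ_{n≥0} p(n) x^n ) · ( Σ_{k∈ℤ} (-1)^k x^{k(3k−1)/2} ) = 1. -/

import Mathlib

open PowerSeries Finset

namespace PentagonalAux

open Multiset

/-- pentagonal number -/
def g (k : ℤ) : ℤ := k * (3 * k - 1) / 2

lemma g_two (k : ℤ) : 2 * g k = (k * (3 * k - 1)) := by
  apply Int.mul_ediv_cancel'
  rcases Int.even_or_odd k with ⟨m, hm⟩ | ⟨m, hm⟩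
  · exact ⟨m * (3 * k - 1), by rw [hm]; ring⟩
  · exact ⟨k * (3 * m + 1), by rw [hm]; ring⟩

lemma g_succ (k : ℤ) : g (k + 1) = g k + (3 * k + 1) := by
  have h1 := g_two k
  have h2 := g_two (k + 1)
  have h3 : (k + 1) * (3 * (k + 1) - 1) = k * (3 * k - 1) + 2 * (3 * k + 1) := by ring
  linarith

lemma g_nonneg (k : ℤ) : 0 ≤ g k := by
  have h := g_two k
  rcases le_or_gt k 0 with h1 | h1
  · nlinarith
  · nlinarith

lemma natAbs_le_g (k : ℤ) : (k.natAbs : ℤ) ≤ g k := by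
  have h := g_two k
  have : (k.natAbs : ℤ) = |k| := (Int.abs_eq_natAbs k).symm
  rw [this]
  rcases lt_trichotomy k 0 with h1 | rfl | h1
  · rw [abs_of_neg h1]
    nlinarith [mul_nonneg (by omega : (0:ℤ) ≤ -k) (by omega : (0:ℤ) ≤ -(3*k+1))]
  · simp [g]
  · rw [abs_of_pos h1]; nlinarith

/-- the sign `(-1)^k` -/
def sgn (k : ℤ) : ℤ := (-1) ^ k.natAbs

lemma sgn_succ (k : ℤ) : sgn (k + 1) = - sgn k := by
  unfold sgn
  rcases Int.even_or_odd k with h | h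
  · rw [(Int.natAbs_even.2 h).neg_one_pow, (Int.natAbs_odd.2 (Even.add_one h)).neg_one_pow]
  · rw [(Int.natAbs_odd.2 h).neg_one_pow, (Int.natAbs_even.2 (Odd.add_one h)).neg_one_pow]
    ring

lemma sgn_pred (k : ℤ) : sgn (k - 1) = - sgn k := by
  have h := sgn_succ (k - 1)
  rw [sub_add_cancel] at h
  linarith

/-! ### multiset helpers -/

lemma sum_filter_pos (s : Multiset ℕ) : (s.filter (fun i => 0 < i)).sum = s.sum := by
  have h := Multiset.filter_add_not (fun i => 0 < i) s
  have h2 : (s.filter (fun i => ¬ 0 < i)).sum = 0 := by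
    apply Multiset.sum_eq_zero
    intro x hx
    have := Multiset.of_mem_filter hx
    omega
  calc (s.filter (fun i => 0 < i)).sum
      = (s.filter (fun i => 0 < i)).sum + (s.filter (fun i => ¬ 0 < i)).sum := by
        rw [h2, add_zero]
    _ = s.sum := by rw [← Multiset.sum_add, h]

lemma sum_map_pred (m : Multiset ℕ) (h : ∀ i ∈ m, 0 < i) :
    (m.map (fun i => i - 1)).sum + Multiset.card m = m.sum := by
  revert h
  refine Multiset.induction_on m (by simp) ?_
  intro a s ih h
  have ha := h a (Multiset.mem_cons_self a s)
  have hs := ih fun i hi => h i (Multiset.mem_cons_of_mem hi)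
  simp only [Multiset.map_cons, Multiset.sum_cons, Multiset.card_cons]
  omega

lemma sup_mem_of_ne_zero {m : Multiset ℕ} (h : m ≠ 0) : m.sup ∈ m := by
  induction m using Multiset.induction_on with
  | empty => exact absurd rfl h
  | cons a s ih =>
    rw [Multiset.sup_cons]
    rcases eq_or_ne s 0 with rfl | hs
    · simp
    · rcases le_total a s.sup with h1 | h1
      · rw [sup_eq_right.2 h1]
        exact Multiset.mem_cons_of_mem (ih hs)
      · rw [sup_eq_left.2 h1]
        exact Multiset.mem_cons_self a s


lemma sum_map_succ (m : Multiset ℕ) :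
    (m.map (fun i => i + 1)).sum = m.sum + Multiset.card m := by
  refine Multiset.induction_on m (by simp) ?_
  intro a s ih
  simp only [Multiset.map_cons, Multiset.sum_cons, Multiset.card_cons]
  omega

lemma filter_pos_map_pred (m : Multiset ℕ) :
    (m.map (fun i => i - 1)).filter (fun i => 0 < i) =
      (m.filter (fun i => 2 ≤ i)).map (fun i => i - 1) := by
  rw [Multiset.filter_map]
  congr 1
  apply Multiset.filter_congr
  intro x _
  simp only [Function.comp_apply]
  omega

lemma map_succ_pred (m : Multiset ℕ) :
    ((m.filter (fun i => 2 ≤ i)).map (fun i => i - 1)).map (fun i => i + 1) =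
      m.filter (fun i => 2 ≤ i) := by
  rw [Multiset.map_map]
  have : ∀ x ∈ m.filter (fun i => 2 ≤ i), ((fun i => i + 1) ∘ fun i => i - 1) x = id x := by
    intro x hx
    have := Multiset.of_mem_filter hx
    simp only [Function.comp_apply, id_eq]
    omega
  rw [Multiset.map_congr rfl this, Multiset.map_id]

lemma filter_ones (m : Multiset ℕ) (pos : ∀ i ∈ m, 0 < i) :
    m.filter (fun i => ¬ 2 ≤ i) =
      Multiset.replicate (Multiset.card m - Multiset.card (m.filter (fun i => 2 ≤ i))) 1 := by
  rw [Multiset.eq_replicate]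
  constructor
  · have h := congrArg Multiset.card (Multiset.filter_add_not (fun i => 2 ≤ i) m)
    rw [Multiset.card_add] at h
    omega
  · intro b hb
    have h1 := Multiset.of_mem_filter hb
    have h2 := pos b (Multiset.mem_of_mem_filter hb)
    omega

/-! ### the two halves of the involution -/

/-- Move from `(k, m)` to `(k+1, Am k m)`. -/
def Am (k : ℤ) (m : Multiset ℕ) : Multiset ℕ :=
  ((m.map (fun i => i - 1)) + {((Multiset.card m : ℤ) - 3 * k - 1).toNat}).filter (fun i => 0 < i)

/-- Move from `(k, m)` to `(k-1, Bm k m)`. -/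
def Bm (k : ℤ) (m : Multiset ℕ) : Multiset ℕ :=
  (m.erase m.sup).map (fun i => i + 1) +
    Multiset.replicate (((m.sup : ℤ) + 3 * k - 2).toNat - Multiset.card (m.erase m.sup)) 1

lemma roundA {k : ℤ} {m : Multiset ℕ} (pos : ∀ i ∈ m, 0 < i)
    (hne : ¬(k = 0 ∧ m = 0))
    (hcond : (m.sup : ℤ) ≤ (Multiset.card m : ℤ) - 3 * k) :
    (∀ i ∈ Am k m, 0 < i) ∧
    ((Am k m).sum : ℤ) = (m.sum : ℤ) - 3 * k - 1 ∧
    ¬ (((Am k m).sup : ℤ) ≤ (Multiset.card (Am k m) : ℤ) - 3 * (k + 1)) ∧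
    Bm (k + 1) (Am k m) = m := by
  have hu0 : (0 : ℤ) ≤ (Multiset.card m : ℤ) - 3 * k - 1 := by
    rcases eq_or_ne m 0 with rfl | hm0
    · have hk : k ≠ 0 := fun hk => hne ⟨hk, rfl⟩
      simp only [Multiset.sup_zero, Multiset.card_zero, Nat.cast_zero] at hcond ⊢
      omega
    · have ha1 : 1 ≤ m.sup := pos _ (sup_mem_of_ne_zero hm0)
      omega
  set u : ℕ := ((Multiset.card m : ℤ) - 3 * k - 1).toNat with hu_def
  have hu : (u : ℤ) = (Multiset.card m : ℤ) - 3 * k - 1 := Int.toNat_of_nonneg hu0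
  have hAmpos : ∀ i ∈ Am k m, 0 < i := fun i hi => Multiset.of_mem_filter hi
  have hs1 : (Am k m).sum = (m.map (fun i => i - 1)).sum + u := by
    rw [Am, sum_filter_pos, Multiset.sum_add, Multiset.sum_singleton]
  have hs2 := sum_map_pred m pos
  have hsum : ((Am k m).sum : ℤ) = (m.sum : ℤ) - 3 * k - 1 := by omega
  refine ⟨hAmpos, hsum, ?_⟩
  by_cases hu1 : 1 ≤ u
  · -- general case: `Am k m = u ::ₘ rest`
    have hAm : Am k m = u ::ₘ (m.filter (fun i => 2 ≤ i)).map (fun i => i - 1) := by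
      rw [Am, Multiset.filter_add, filter_pos_map_pred, Multiset.filter_singleton,
        if_pos (by omega : 0 < u), add_comm, Multiset.singleton_add]
    set rest : Multiset ℕ := (m.filter (fun i => 2 ≤ i)).map (fun i => i - 1) with hrest_def
    have hrest_le : ∀ x ∈ rest, x ≤ u := by
      intro x hx
      rw [hrest_def, Multiset.mem_map] at hx
      obtain ⟨i, hi, rfl⟩ := hx
      have hi2 := Multiset.of_mem_filter hi
      have him : i ∈ m := Multiset.mem_of_mem_filter hi
      have : (i : ℤ) ≤ (m.sup : ℤ) := by exact_mod_cast Multiset.le_sup him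
      omega
    have hsup : (Am k m).sup = u := by
      rw [hAm, Multiset.sup_cons]
      exact sup_eq_left.2 (Multiset.sup_le.2 hrest_le)
    have hcard : Multiset.card (Am k m) = Multiset.card (m.filter (fun i => 2 ≤ i)) + 1 := by
      rw [hAm, Multiset.card_cons, Multiset.card_map]
    have hc2 : Multiset.card (m.filter (fun i => 2 ≤ i)) ≤ Multiset.card m :=
      Multiset.card_le_card (Multiset.filter_le _ m)
    constructor
    · rw [hsup, hcard]
      push_cast
      omega
    · rw [Bm, hsup, hAm, Multiset.erase_cons_head]
      rw [show ((u : ℤ) + 3 * (k + 1) - 2).toNat = Multiset.card m from by omega]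
      rw [hrest_def, map_succ_pred, Multiset.card_map]
      rw [← filter_ones m pos]
      exact Multiset.filter_add_not _ m
  · -- degenerate case: all parts are 1 and `Am k m = 0`
    have hu0' : u = 0 := by omega
    have hm0 : m ≠ 0 := by
      rintro rfl
      simp only [Multiset.card_zero, Nat.cast_zero] at hu
      omega
    have ha1 : 1 ≤ m.sup := pos _ (sup_mem_of_ne_zero hm0)
    have hall : ∀ i ∈ m, i = 1 := by
      intro i hi
      have h1 := pos i hi
      have h2 : (i : ℤ) ≤ (m.sup : ℤ) := by exact_mod_cast Multiset.le_sup hi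
      have h3 : (m.sup : ℤ) ≤ 1 := by omega
      omega
    have hm : m = Multiset.replicate (Multiset.card m) 1 :=
      Multiset.eq_replicate.2 ⟨rfl, hall⟩
    have hAm : Am k m = 0 := by
      rw [Am, Multiset.filter_eq_nil]
      intro a ha
      rw [Multiset.mem_add] at ha
      rcases ha with ha | ha
      · rw [Multiset.mem_map] at ha
        obtain ⟨i, hi, rfl⟩ := ha
        have := hall i hi
        omega
      · rw [Multiset.mem_singleton] at ha
        omega
    have hcm1 : 1 ≤ Multiset.card m := Multiset.card_pos.2 hm0
    constructor
    · rw [hAm]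
      simp only [Multiset.sup_zero, Nat.bot_eq_zero, Multiset.card_zero, Nat.cast_zero]
      omega
    · rw [hAm, Bm]
      simp only [Multiset.sup_zero, Nat.bot_eq_zero, Multiset.erase_zero, Multiset.map_zero,
        Multiset.card_zero, Nat.cast_zero, zero_add, Nat.sub_zero]
      rw [show ((3 * (k + 1) - 2 : ℤ)).toNat = Multiset.card m from by omega]
      exact hm.symm

lemma roundB {k : ℤ} {m : Multiset ℕ} (pos : ∀ i ∈ m, 0 < i)
    (hcond : ¬ ((m.sup : ℤ) ≤ (Multiset.card m : ℤ) - 3 * k)) :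
    (∀ i ∈ Bm k m, 0 < i) ∧
    ((Bm k m).sum : ℤ) = (m.sum : ℤ) + 3 * k - 2 ∧
    (((Bm k m).sup : ℤ) ≤ (Multiset.card (Bm k m) : ℤ) - 3 * (k - 1)) ∧
    Am (k - 1) (Bm k m) = m := by
  rcases eq_or_ne m 0 with rfl | hm0
  · -- empty partition: `Bm k 0 = replicate (3k-2) 1`
    have hk : 1 ≤ k := by
      simp only [Multiset.sup_zero, Nat.bot_eq_zero, Multiset.card_zero, Nat.cast_zero] at hcond
      omega
    have hBm : Bm k 0 = Multiset.replicate ((3 * k - 2).toNat) 1 := by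
      rw [Bm]
      simp only [Multiset.sup_zero, Nat.bot_eq_zero, Multiset.erase_zero, Multiset.map_zero,
        Multiset.card_zero, Nat.cast_zero, zero_add, Nat.sub_zero]
    have hr : (((3 * k - 2 : ℤ)).toNat : ℤ) = 3 * k - 2 := Int.toNat_of_nonneg (by omega)
    have hr1 : 1 ≤ (3 * k - 2 : ℤ).toNat := by omega
    have hsup1 : (Multiset.replicate ((3 * k - 2).toNat) 1).sup = 1 := by
      apply le_antisymm
      · apply Multiset.sup_le.2
        intro b hb
        rw [Multiset.eq_of_mem_replicate hb]
      · exact Multiset.le_sup (Multiset.mem_replicate.2 ⟨by omega, rfl⟩)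
    refine ⟨?_, ?_, ?_, ?_⟩
    · intro i hi
      rw [hBm] at hi
      rw [Multiset.eq_of_mem_replicate hi]
      omega
    · rw [hBm, Multiset.sum_replicate, smul_eq_mul, mul_one]
      simp only [Multiset.sum_zero, Nat.cast_zero]
      omega
    · rw [hBm, hsup1, Multiset.card_replicate]
      push_cast
      omega
    · rw [hBm, Am, Multiset.card_replicate]
      rw [show (((((3 * k - 2 : ℤ)).toNat : ℕ) : ℤ) - 3 * (k - 1) - 1).toNat = 0 from by omega]
      rw [Multiset.filter_eq_nil.2]
      intro a ha
      rw [Multiset.mem_add] at ha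
      rcases ha with ha | ha
      · rw [Multiset.mem_map] at ha
        obtain ⟨i, hi, rfl⟩ := ha
        rw [Multiset.eq_of_mem_replicate hi]
        omega
      · rw [Multiset.mem_singleton] at ha
        omega
  · -- nonempty partition
    have hmem : m.sup ∈ m := sup_mem_of_ne_zero hm0
    have ha1 : 1 ≤ m.sup := pos _ hmem
    have hm : m.sup ::ₘ m.erase m.sup = m := Multiset.cons_erase hmem
    have hcard0 : Multiset.card (m.erase m.sup) + 1 = Multiset.card m := by
      conv_rhs => rw [← hm]
      rw [Multiset.card_cons]
    have hsum0 : m.sup + (m.erase m.sup).sum = m.sum := by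
      conv_rhs => rw [← hm]
      rw [Multiset.sum_cons]
    have hR : ((((m.sup : ℤ) + 3 * k - 2).toNat : ℕ) : ℤ) = (m.sup : ℤ) + 3 * k - 2 :=
      Int.toNat_of_nonneg (by omega)
    set R : ℕ := ((m.sup : ℤ) + 3 * k - 2).toNat with hR_def
    set r : ℕ := R - Multiset.card (m.erase m.sup) with hr_def
    have hRge : Multiset.card (m.erase m.sup) ≤ R := by omega
    have hr : (r : ℤ) = (m.sup : ℤ) + 3 * k - (Multiset.card m : ℤ) - 1 := by omega
    have hBm : Bm k m = (m.erase m.sup).map (fun i => i + 1) + Multiset.replicate r 1 := rfl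
    have hpos' : ∀ i ∈ Bm k m, 0 < i := by
      intro i hi
      rw [hBm, Multiset.mem_add] at hi
      rcases hi with hi | hi
      · rw [Multiset.mem_map] at hi
        obtain ⟨j, hj, rfl⟩ := hi
        omega
      · rw [Multiset.eq_of_mem_replicate hi]
        omega
    have hsum : ((Bm k m).sum : ℤ) = (m.sum : ℤ) + 3 * k - 2 := by
      have h1 : (Bm k m).sum = (m.erase m.sup).sum + Multiset.card (m.erase m.sup) + r := by
        rw [hBm, Multiset.sum_add, sum_map_succ, Multiset.sum_replicate, smul_eq_mul, mul_one]
      omega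
    have hcard : (Multiset.card (Bm k m) : ℤ) = (m.sup : ℤ) + 3 * k - 2 := by
      have h1 : Multiset.card (Bm k m) = Multiset.card (m.erase m.sup) + r := by
        rw [hBm, Multiset.card_add, Multiset.card_map, Multiset.card_replicate]
      omega
    have hsuple : ((Bm k m).sup : ℤ) ≤ (m.sup : ℤ) + 1 := by
      have : (Bm k m).sup ≤ m.sup + 1 := by
        apply Multiset.sup_le.2
        intro b hb
        rw [hBm, Multiset.mem_add] at hb
        rcases hb with hb | hb
        · rw [Multiset.mem_map] at hb
          obtain ⟨j, hj, rfl⟩ := hb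
          have : j ≤ m.sup := Multiset.le_sup (Multiset.mem_of_mem_erase hj)
          omega
        · rw [Multiset.eq_of_mem_replicate hb]
          omega
      exact_mod_cast this
    refine ⟨hpos', hsum, by omega, ?_⟩
    -- the way back
    rw [Am]
    rw [show (((Multiset.card (Bm k m) : ℕ) : ℤ) - 3 * (k - 1) - 1).toNat = m.sup from by omega]
    rw [hBm, Multiset.map_add, Multiset.map_map, Multiset.map_replicate]
    have e1 : Multiset.map ((fun i => i - 1) ∘ fun i => i + 1) (m.erase m.sup) =
        m.erase m.sup := by
      have : ∀ x ∈ m.erase m.sup, ((fun i => i - 1) ∘ fun i => i + 1) x = id x := by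
        intro x _
        simp only [Function.comp_apply, id_eq]
        omega
      rw [Multiset.map_congr rfl this, Multiset.map_id]
    rw [e1]
    simp only [show (1 : ℕ) - 1 = 0 from rfl]
    rw [Multiset.filter_add, Multiset.filter_add]
    rw [Multiset.filter_eq_self.2 (fun a ha => pos a (Multiset.mem_of_mem_erase ha))]
    rw [Multiset.filter_eq_nil.2 (fun a ha => by rw [Multiset.eq_of_mem_replicate ha]; omega)]
    rw [Multiset.filter_singleton, if_pos (by omega : 0 < m.sup)]
    rw [add_zero, add_comm, Multiset.singleton_add]
    exact hm

/-! ### the index set -/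

/-- The multisets that are partitions of `n - g k`. -/
noncomputable def fiber (n : ℕ) (k : ℤ) : Finset (Multiset ℕ) :=
  ((Finset.univ : Finset (Nat.Partition (n - (g k).toNat))).image Nat.Partition.parts).filter
    (fun m => (m.sum : ℤ) + g k = (n : ℤ))

noncomputable def T (n : ℕ) : Finset ((_ : ℤ) × Multiset ℕ) :=
  (Finset.Icc (-(n : ℤ)) (n : ℤ)).sigma (fun k => fiber n k)

lemma mem_T {n : ℕ} {p : (_ : ℤ) × Multiset ℕ} :
    p ∈ T n ↔ (∀ i ∈ p.2, 0 < i) ∧ (p.2.sum : ℤ) + g p.1 = (n : ℤ) := by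
  obtain ⟨k, m⟩ := p
  simp only [T, Finset.mem_sigma, fiber, Finset.mem_filter, Finset.mem_image, Finset.mem_univ,
    Finset.mem_Icc, true_and]
  constructor
  · rintro ⟨hk, ⟨q, rfl⟩, hsum⟩
    exact ⟨fun i hi => q.parts_pos hi, hsum⟩
  · rintro ⟨hpos, hsum⟩
    have hg0 := g_nonneg k
    have hsum0 : (0 : ℤ) ≤ (m.sum : ℤ) := Int.ofNat_nonneg _
    have habs := natAbs_le_g k
    refine ⟨by omega, ⟨⟨m, fun hi => hpos _ hi, ?_⟩, rfl⟩, hsum⟩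
    omega

lemma card_fiber (n : ℕ) (k : ℤ) :
    (fiber n k).card =
      if g k ≤ (n : ℤ) then Fintype.card (Nat.Partition (n - (g k).toNat)) else 0 := by
  have hg0 := g_nonneg k
  have hinj : Function.Injective (Nat.Partition.parts (n := n - (g k).toNat)) :=
    fun p q h => Nat.Partition.ext h
  split_ifs with hg
  · rw [fiber, Finset.filter_true_of_mem, Finset.card_image_of_injective _ hinj,
      Finset.card_univ]
    rintro m hm
    rw [Finset.mem_image] at hm
    obtain ⟨q, -, rfl⟩ := hm
    have := q.parts_sum
    rw [this]
    omega
  · rw [fiber, Finset.filter_false_of_mem, Finset.card_empty]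
    rintro m hm
    rw [Finset.mem_image] at hm
    obtain ⟨q, -, rfl⟩ := hm
    have := q.parts_sum
    rw [this]
    omega

/-! ### the involution -/

noncomputable def invol (p : (_ : ℤ) × Multiset ℕ) : (_ : ℤ) × Multiset ℕ :=
  if (p.2.sup : ℤ) ≤ (Multiset.card p.2 : ℤ) - 3 * p.1 then
    ⟨p.1 + 1, Am p.1 p.2⟩
  else
    ⟨p.1 - 1, Bm p.1 p.2⟩

lemma T_sum (n : ℕ) (hn : 1 ≤ n) : ∑ p ∈ T n, sgn p.1 = 0 := by
  apply Finset.sum_involution (fun p _ => invol p)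
  · -- sgn p.1 + sgn (invol p).1 = 0
    rintro ⟨k, m⟩ -
    unfold invol
    split_ifs <;> dsimp only <;> simp [sgn_succ, sgn_pred]
  · -- invol p ≠ p
    rintro ⟨k, m⟩ - -
    unfold invol
    split_ifs <;> intro h <;> (have := congrArg Sigma.fst h; dsimp only at this; omega)
  · -- invol p ∈ T n
    rintro ⟨k, m⟩ hp
    rw [mem_T] at hp
    obtain ⟨hpos, hsum⟩ := hp
    dsimp only at hpos hsum
    rw [mem_T]
    by_cases hc : (m.sup : ℤ) ≤ (Multiset.card m : ℤ) - 3 * k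
    · have hne : ¬(k = 0 ∧ m = 0) := by
        rintro ⟨rfl, rfl⟩
        simp [show g 0 = 0 from rfl] at hsum
        omega
      obtain ⟨h1, h2, -, -⟩ := roundA hpos hne hc
      have e1 : invol ⟨k, m⟩ = ⟨k + 1, Am k m⟩ := by
        unfold invol; dsimp only; rw [if_pos hc]
      rw [e1]
      refine ⟨h1, ?_⟩
      show ((Am k m).sum : ℤ) + g (k + 1) = (n : ℤ)
      rw [g_succ]
      omega
    · obtain ⟨h1, h2, -, -⟩ := roundB hpos hc
      have e1 : invol ⟨k, m⟩ = ⟨k - 1, Bm k m⟩ := by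
        unfold invol; dsimp only; rw [if_neg hc]
      rw [e1]
      refine ⟨h1, ?_⟩
      show ((Bm k m).sum : ℤ) + g (k - 1) = (n : ℤ)
      have hg : g k = g (k - 1) + (3 * (k - 1) + 1) := by
        have := g_succ (k - 1); rw [sub_add_cancel] at this; omega
      omega
  · -- invol (invol p) = p
    rintro ⟨k, m⟩ hp
    rw [mem_T] at hp
    obtain ⟨hpos, hsum⟩ := hp
    dsimp only at hpos hsum
    show invol (invol ⟨k, m⟩) = ⟨k, m⟩
    by_cases hc : (m.sup : ℤ) ≤ (Multiset.card m : ℤ) - 3 * k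
    · have hne : ¬(k = 0 ∧ m = 0) := by
        rintro ⟨rfl, rfl⟩
        simp [show g 0 = 0 from rfl] at hsum
        omega
      obtain ⟨-, -, h3, h4⟩ := roundA hpos hne hc
      have e1 : invol ⟨k, m⟩ = ⟨k + 1, Am k m⟩ := by
        unfold invol; dsimp only; rw [if_pos hc]
      have e2 : invol ⟨k + 1, Am k m⟩ = ⟨k + 1 - 1, Bm (k + 1) (Am k m)⟩ := by
        unfold invol; dsimp only; rw [if_neg h3]
      rw [e1, e2, h4]
      simp only [add_sub_cancel_right]
    · obtain ⟨-, -, h3, h4⟩ := roundB hpos hc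
      have e1 : invol ⟨k, m⟩ = ⟨k - 1, Bm k m⟩ := by
        unfold invol; dsimp only; rw [if_neg hc]
      have e2 : invol ⟨k - 1, Bm k m⟩ = ⟨k - 1 + 1, Am (k - 1) (Bm k m)⟩ := by
        unfold invol; dsimp only; rw [if_pos h3]
      rw [e1, e2, h4]
      simp only [sub_add_cancel]

lemma inner_sum (n : ℕ) (k : ℤ) :
    ∑ i ∈ Finset.range (n + 1),
      (if g k = ((n - i : ℕ) : ℤ) then ((Fintype.card (Nat.Partition i) : ℤ) * sgn k) else 0) =
    (if g k ≤ (n : ℤ) then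
      (Fintype.card (Nat.Partition (n - (g k).toNat)) : ℤ) * sgn k else 0) := by
  have hg0 := g_nonneg k
  split_ifs with hg
  · have htn : (g k).toNat ≤ n := by omega
    rw [Finset.sum_eq_single_of_mem (n - (g k).toNat) (Finset.mem_range.2 (by omega))]
    · rw [if_pos (by omega : g k = ((n - (n - (g k).toNat) : ℕ) : ℤ))]
    · intro b hb hbne
      rw [Finset.mem_range] at hb
      rw [if_neg]
      intro h
      apply hbne
      omega
  · apply Finset.sum_eq_zero
    intro i hi
    rw [Finset.mem_range] at hi
    rw [if_neg]
    intro h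
    omega

end PentagonalAux




/-- Generating function of the partition numbers. -/
noncomputable def partitionSeries : PowerSeries ℤ :=
  PowerSeries.mk fun n => (Fintype.card (Nat.Partition n) : ℤ)

/-- Euler's pentagonal number series `∑_{k ∈ ℤ} (-1)^k x^{k(3k-1)/2}`:
the coefficient of `x^n` is the sum of `(-1)^k` over all integers `k`
with `k(3k-1)/2 = n` (all such `k` satisfy `|k| ≤ n`). -/
noncomputable def pentagonalSeries : PowerSeries ℤ :=
  PowerSeries.mk fun n =>
    ∑ k ∈ Finset.Icc (-(n : ℤ)) (n : ℤ),
      if k * (3 * k - 1) / 2 = (n : ℤ) then (-1 : ℤ) ^ k.natAbs else 0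


namespace PentagonalAux

lemma coeff_eq (n : ℕ) :
    (PowerSeries.coeff n) (partitionSeries * _root_.pentagonalSeries) = ∑ p ∈ T n, sgn p.1 := by
  rw [PowerSeries.coeff_mul, Finset.Nat.sum_antidiagonal_eq_sum_range_succ_mk]
  simp only [partitionSeries, _root_.pentagonalSeries, PowerSeries.coeff_mk]
  have step1 : ∀ i ∈ Finset.range (n + 1),
      (Fintype.card (Nat.Partition i) : ℤ) *
        (∑ k ∈ Finset.Icc (-((n - i : ℕ) : ℤ)) ((n - i : ℕ) : ℤ),
          if k * (3 * k - 1) / 2 = ((n - i : ℕ) : ℤ) then (-1 : ℤ) ^ k.natAbs else 0) =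
      ∑ k ∈ Finset.Icc (-(n : ℤ)) (n : ℤ),
          (if g k = ((n - i : ℕ) : ℤ) then
            (Fintype.card (Nat.Partition i) : ℤ) * sgn k else 0) := by
    intro i hi
    rw [Finset.mul_sum]
    simp only [mul_ite, mul_zero]
    apply Finset.sum_subset (Finset.Icc_subset_Icc (by omega) (by omega))
    intro x hx hnx
    rw [if_neg]
    intro hgx
    apply hnx
    have h1 := natAbs_le_g x
    have h2 : g x = x * (3 * x - 1) / 2 := rfl
    rw [Finset.mem_Icc]
    omega
  rw [Finset.sum_congr rfl step1, Finset.sum_comm]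
  rw [T, Finset.sum_sigma]
  apply Finset.sum_congr rfl
  intro k hk
  dsimp only
  rw [inner_sum n k, Finset.sum_const, card_fiber]
  split_ifs with h
  · rw [nsmul_eq_mul]
  · rw [zero_smul]

lemma T_zero_sum : ∑ p ∈ T 0, sgn p.1 = 1 := by
  rw [T, Finset.sum_sigma]
  simp only [Nat.cast_zero, neg_zero]
  rw [Finset.Icc_self, Finset.sum_singleton]
  rw [Finset.sum_const, card_fiber]
  rw [if_pos (by norm_num [g])]
  have e0 : 0 - (g 0).toNat = 0 := by norm_num [g]
  have : Fintype.card (Nat.Partition (0 - (g 0).toNat)) = 1 := by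
    rw [e0]; exact Fintype.card_unique
  rw [this]
  simp [sgn]

end PentagonalAux

theorem partition_generating_function : partitionSeries * _root_.pentagonalSeries = 1 := by
  ext n
  rw [PentagonalAux.coeff_eq, PowerSeries.coeff_one]
  rcases n with _ | n
  · rw [if_pos rfl, PentagonalAux.T_zero_sum]
  · rw [if_neg (Nat.succ_ne_zero n)]
    exact PentagonalAux.T_sum (n + 1) (by omega)
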